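/- A set I ⊆ [n] is independent in D(M_1,M_2) if and only if for every j ∈ [n] (whether or not j ∈ I) there exist an independent set I_1 of M_1 and an independent set I_2 of M_2 whose multiset sum (i.e., sum of indicator vectors) equals the multiset I + {j}. -/

import Mathlib

open Finset

/-- A matroid on the ground set `Fin n`, presented by its rank function. -/
structure FinMatroid (n : ℕ) where
  rank : Finset (Fin n) → ℕ
  rank_empty : rank ∅ = 0
  rank_le_card : ∀ S : Finset (Fin n), rank S ≤ S.card
  rank_mono : ∀ ⦃S T : Finset (Fin n)⦄, S ⊆ T → rank S ≤ rank T
  rank_submod : ∀ S T : Finset (Fin n),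
    rank (S ∪ T) + rank (S ∩ T) ≤ rank S + rank T

namespace FinMatroid

variable {n : ℕ}

/-- A set is independent if its rank equals its cardinality. -/
def Indep (M : FinMatroid n) (I : Finset (Fin n)) : Prop := M.rank I = I.card

/-- The rank of the matroid (rank of the full ground set). -/
def rk (M : FinMatroid n) : ℕ := M.rank Finset.univ

/-- A matroid is loopless if every singleton has positive rank. -/
def Loopless (M : FinMatroid n) : Prop := ∀ i : Fin n, 0 < M.rank {i}

/-- Two matroids on `[n]` have no common loops. -/
def NoCommonLoops (M₁ M₂ : FinMatroid n) : Prop :=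
  ∀ i : Fin n, 0 < M₁.rank {i} ∨ 0 < M₂.rank {i}

/-- A valid family for the Dilworth minimum: pairwise disjoint nonempty
subsets of `S`. -/
def ValidFamily (S : Finset (Fin n)) (𝒯 : Finset (Finset (Fin n))) : Prop :=
  (∀ T ∈ 𝒯, T ⊆ S ∧ T.Nonempty) ∧
    ∀ T ∈ 𝒯, ∀ T' ∈ 𝒯, T ≠ T' → Disjoint T T'

/-- The value `Σ_i (rank_{M₁}(T_i) + rank_{M₂}(T_i) − 1) + |S \ ∪ T_i|`
associated to a family. -/
def famValue (M₁ M₂ : FinMatroid n) (S : Finset (Fin n))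
    (𝒯 : Finset (Finset (Fin n))) : ℕ :=
  (∑ T ∈ 𝒯, (M₁.rank T + M₂.rank T - 1)) + (S \ 𝒯.sup id).card

/-- The rank function of the diagonal Dilworth truncation `D(M₁,M₂)`. -/
noncomputable def rankD (M₁ M₂ : FinMatroid n) (S : Finset (Fin n)) : ℕ :=
  sInf {v : ℕ | ∃ 𝒯 : Finset (Finset (Fin n)),
    ValidFamily S 𝒯 ∧ v = famValue M₁ M₂ S 𝒯}

/-- Independence in the diagonal Dilworth truncation. -/
def IndepD (M₁ M₂ : FinMatroid n) (I : Finset (Fin n)) : Prop :=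
  rankD M₁ M₂ I = I.card

/-- Circuits of the diagonal Dilworth truncation: minimal dependent sets. -/
def CircuitD (M₁ M₂ : FinMatroid n) (C : Finset (Fin n)) : Prop :=
  ¬ IndepD M₁ M₂ C ∧ ∀ C' : Finset (Fin n), C' ⊂ C → IndepD M₁ M₂ C'

end FinMatroid

namespace FinMatroid

variable {n : ℕ}

lemma rank_union_le (M : FinMatroid n) (A B : Finset (Fin n)) :
    M.rank (A ∪ B) ≤ M.rank A + M.rank B := by
  have := M.rank_submod A B; omega

lemma rank_union_le_card (M : FinMatroid n) (A B : Finset (Fin n)) :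
    M.rank (A ∪ B) ≤ M.rank A + B.card := by
  have h1 := M.rank_union_le A B
  have h2 := M.rank_le_card B
  omega

lemma rank_insert_le (M : FinMatroid n) (e : Fin n) (A : Finset (Fin n)) :
    M.rank (insert e A) ≤ M.rank A + M.rank {e} := by
  have h : insert e A = A ∪ {e} := by rw [Finset.insert_eq, Finset.union_comm]
  rw [h]; exact M.rank_union_le A {e}

lemma indep_empty (M : FinMatroid n) : M.Indep ∅ := by
  simp [Indep, M.rank_empty]

lemma indep_subset (M : FinMatroid n) {I J : Finset (Fin n)} (hJ : M.Indep J) (h : I ⊆ J) :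
    M.Indep I := by
  have h1 : J = I ∪ (J \ I) := (Finset.union_sdiff_of_subset h).symm
  have h2 : M.rank J ≤ M.rank I + (J \ I).card := by
    have hx := M.rank_union_le_card I (J \ I)
    rw [Finset.union_sdiff_of_subset h] at hx
    exact hx
  have h3 : (J \ I).card = J.card - I.card := Finset.card_sdiff_of_subset h
  have h4 : I.card ≤ J.card := Finset.card_le_card h
  have h5 := M.rank_le_card I
  unfold Indep at hJ ⊢
  omega

lemma indep_card_le_rank (M : FinMatroid n) {I : Finset (Fin n)} (hI : M.Indep I)
    {S : Finset (Fin n)} (h : I ⊆ S) : I.card ≤ M.rank S := hI ▸ M.rank_mono h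

/-- Contraction of a matroid by a non-loop element `e`. -/
def contract (M : FinMatroid n) (e : Fin n) (he : 0 < M.rank {e}) : FinMatroid n where
  rank S := M.rank (insert e S) - 1
  rank_empty := by
    have h1 : insert e (∅ : Finset (Fin n)) = {e} := by simp
    have h2 := M.rank_le_card {e}
    simp only [h1]
    simp at h2
    omega
  rank_le_card := by
    intro S
    have h1 := M.rank_insert_le e S
    have h2 := M.rank_le_card S
    have h3 := M.rank_le_card {e}
    simp at h3
    omega
  rank_mono := by
    intro S T hST
    have := M.rank_mono (Finset.insert_subset_insert e hST)
    omega
  rank_submod := by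
    intro S T
    have h1 : insert e (S ∪ T) = insert e S ∪ insert e T := by
      ext x; simp only [Finset.mem_insert, Finset.mem_union, Finset.mem_inter, Finset.mem_sdiff, Finset.mem_erase]; tauto
    have h2 : insert e (S ∩ T) = insert e S ∩ insert e T := by
      ext x; simp only [Finset.mem_insert, Finset.mem_union, Finset.mem_inter, Finset.mem_sdiff, Finset.mem_erase]; tauto
    have h3 := M.rank_submod (insert e S) (insert e T)
    have h4 : M.rank {e} ≤ M.rank (insert e S) :=
      M.rank_mono (by simp)
    have h5 : M.rank {e} ≤ M.rank (insert e T) :=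
      M.rank_mono (by simp)
    have h6 : M.rank {e} ≤ M.rank (insert e S ∪ insert e T) :=
      M.rank_mono (by simp)
    have h7 : M.rank {e} ≤ M.rank (insert e S ∩ insert e T) :=
      M.rank_mono (by simp)
    rw [h1, h2]
    omega

lemma contract_rank (M : FinMatroid n) (e : Fin n) (he : 0 < M.rank {e})
    (S : Finset (Fin n)) : (M.contract e he).rank S = M.rank (insert e S) - 1 := rfl

lemma contract_indep (M : FinMatroid n) {e : Fin n} {he : 0 < M.rank {e}}
    {J : Finset (Fin n)} (hJ : (M.contract e he).Indep J) (heJ : e ∉ J) :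
    M.Indep (insert e J) := by
  have h1 : M.rank (insert e J) - 1 = J.card := hJ
  have h2 := M.rank_insert_le e J
  have h3 := M.rank_le_card J
  have h4 : M.rank {e} ≤ M.rank (insert e J) := M.rank_mono (by simp)
  have h5 := M.rank_le_card {e}
  simp at h5
  have h6 : (insert e J).card = J.card + 1 := Finset.card_insert_of_notMem heJ
  unfold Indep
  omega

/-- Restriction of a matroid to a set `X` (rank of the intersection). -/
def restrict (M : FinMatroid n) (X : Finset (Fin n)) : FinMatroid n where
  rank S := M.rank (S ∩ X)
  rank_empty := by simp [M.rank_empty]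
  rank_le_card := by
    intro S
    exact le_trans (M.rank_le_card _) (Finset.card_le_card Finset.inter_subset_left)
  rank_mono := by
    intro S T h
    exact M.rank_mono (Finset.inter_subset_inter h le_rfl)
  rank_submod := by
    intro S T
    have h1 : (S ∪ T) ∩ X = (S ∩ X) ∪ (T ∩ X) := Finset.union_inter_distrib_right S T X
    have h2 : (S ∩ T) ∩ X = (S ∩ X) ∩ (T ∩ X) := by ext x; simp only [Finset.mem_insert, Finset.mem_union, Finset.mem_inter, Finset.mem_sdiff, Finset.mem_erase]; tauto
    rw [h1, h2]
    exact M.rank_submod _ _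

lemma dual_exact (M : FinMatroid n) (X S : Finset (Fin n)) :
    M.rank X ≤ (S ∩ X).card + M.rank (X \ S) := by
  have h1 : X ⊆ (X \ S) ∪ (S ∩ X) := by intro x hx; simp [hx]; tauto
  calc M.rank X ≤ M.rank ((X \ S) ∪ (S ∩ X)) := M.rank_mono h1
    _ ≤ M.rank (X \ S) + (S ∩ X).card := M.rank_union_le_card _ _
    _ = (S ∩ X).card + M.rank (X \ S) := by omega

/-- The dual of `M` within the set `X`. -/
def dualIn (M : FinMatroid n) (X : Finset (Fin n)) : FinMatroid n where
  rank S := (S ∩ X).card + M.rank (X \ S) - M.rank X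
  rank_empty := by simp
  rank_le_card := by
    intro S
    have h1 : M.rank (X \ S) ≤ M.rank X := M.rank_mono (Finset.sdiff_subset)
    have h2 : (S ∩ X).card ≤ S.card := Finset.card_le_card Finset.inter_subset_left
    omega
  rank_mono := by
    intro S T hST
    have hsub : X \ S ⊆ (X \ T) ∪ ((T \ S) ∩ X) := by
      intro x hx; simp at hx ⊢; tauto
    have h1 : M.rank (X \ S) ≤ M.rank (X \ T) + ((T \ S) ∩ X).card :=
      le_trans (M.rank_mono hsub) (M.rank_union_le_card _ _)
    have h2 : (T \ S) ∩ X = (T ∩ X) \ (S ∩ X) := by ext x; simp only [Finset.mem_insert, Finset.mem_union, Finset.mem_inter, Finset.mem_sdiff, Finset.mem_erase]; tauto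
    have h3 : S ∩ X ⊆ T ∩ X := Finset.inter_subset_inter hST le_rfl
    have h4 : ((T ∩ X) \ (S ∩ X)).card = (T ∩ X).card - (S ∩ X).card :=
      Finset.card_sdiff_of_subset h3
    have h5 : (S ∩ X).card ≤ (T ∩ X).card := Finset.card_le_card h3
    rw [h2, h4] at h1
    omega
  rank_submod := by
    intro S T
    have f1 : ((S ∪ T) ∩ X).card + ((S ∩ T) ∩ X).card = (S ∩ X).card + (T ∩ X).card := by
      have e1 : (S ∪ T) ∩ X = (S ∩ X) ∪ (T ∩ X) := Finset.union_inter_distrib_right S T X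
      have e2 : (S ∩ T) ∩ X = (S ∩ X) ∩ (T ∩ X) := by ext x; simp only [Finset.mem_insert, Finset.mem_union, Finset.mem_inter, Finset.mem_sdiff, Finset.mem_erase]; tauto
      rw [e1, e2]
      exact Finset.card_union_add_card_inter _ _
    have e3 : X \ (S ∩ T) = (X \ S) ∪ (X \ T) := by ext x; simp only [Finset.mem_insert, Finset.mem_union, Finset.mem_inter, Finset.mem_sdiff, Finset.mem_erase]; tauto
    have e4 : X \ (S ∪ T) = (X \ S) ∩ (X \ T) := by ext x; simp only [Finset.mem_insert, Finset.mem_union, Finset.mem_inter, Finset.mem_sdiff, Finset.mem_erase]; tauto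
    have f2 : M.rank (X \ (S ∪ T)) + M.rank (X \ (S ∩ T)) ≤
        M.rank (X \ S) + M.rank (X \ T) := by
      rw [e3, e4]
      have := M.rank_submod (X \ S) (X \ T)
      omega
    have g1 := M.dual_exact X S
    have g2 := M.dual_exact X T
    have g3 := M.dual_exact X (S ∪ T)
    have g4 := M.dual_exact X (S ∩ T)
    omega

end FinMatroid

namespace FinMatroid

variable {n : ℕ}

/-- Matroid intersection theorem (existence half), by induction on the ground set. -/
theorem exists_common_indep : ∀ (N : ℕ) (E : Finset (Fin n)), E.card ≤ N →
    ∀ (M₁ M₂ : FinMatroid n) (k : ℕ),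
    (∀ A ⊆ E, k ≤ M₁.rank A + M₂.rank (E \ A)) →
    ∃ J ⊆ E, M₁.Indep J ∧ M₂.Indep J ∧ k ≤ J.card := by
  intro N
  induction N with
  | zero =>
    intro E hE M₁ M₂ k hk
    have hE0 : E = ∅ := Finset.card_eq_zero.mp (Nat.le_zero.mp hE)
    refine ⟨∅, by simp, M₁.indep_empty, M₂.indep_empty, ?_⟩
    have := hk ∅ (by simp)
    simp [hE0, M₁.rank_empty, M₂.rank_empty] at this
    simpa using this
  | succ N ih =>
    intro E hE M₁ M₂ k hk
    rcases Nat.lt_or_ge E.card (N + 1) with hlt | hge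
    · exact ih E (Nat.lt_succ_iff.mp hlt) M₁ M₂ k hk
    -- E is nonempty
    have hne : E.Nonempty := Finset.card_pos.mp (by omega)
    obtain ⟨e, heE⟩ := hne
    set E' := E.erase e with hE'
    have hE'card : E'.card ≤ N := by
      have h := Finset.card_erase_of_mem heE
      rw [← hE'] at h
      omega
    have hE'sub : E' ⊆ E := Finset.erase_subset e E
    rcases Nat.eq_zero_or_pos k with hk0 | hkpos
    · exact ⟨∅, by simp, M₁.indep_empty, M₂.indep_empty, by omega⟩
    by_cases hloop1 : M₁.rank {e} = 0
    · -- delete a loop of M₁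
      obtain ⟨J, hJE, h1, h2, h3⟩ := ih E' hE'card M₁ M₂ k (by
        intro A hA
        have hsub : insert e A ⊆ E :=
          Finset.insert_subset heE (hA.trans hE'sub)
        have h := hk (insert e A) hsub
        have hEq : E \ insert e A = E' \ A := by
          ext x; simp [hE', Finset.mem_erase]; tauto
        have hr : M₁.rank (insert e A) ≤ M₁.rank A + M₁.rank {e} := M₁.rank_insert_le e A
        rw [hEq] at h
        omega)
      exact ⟨J, hJE.trans hE'sub, h1, h2, h3⟩
    by_cases hloop2 : M₂.rank {e} = 0
    · obtain ⟨J, hJE, h1, h2, h3⟩ := ih E' hE'card M₁ M₂ k (by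
        intro A hA
        have h := hk A (hA.trans hE'sub)
        have heA : e ∉ A := fun hmem => (Finset.mem_erase.mp (hA hmem)).1 rfl
        have hEq : E \ A = insert e (E' \ A) := by
          ext x; simp [hE', Finset.mem_erase]
          constructor
          · rintro ⟨hx, hxA⟩
            by_cases hxe : x = e
            · left; exact hxe
            · right; exact ⟨⟨hxe, hx⟩, hxA⟩
          · rintro (rfl | ⟨⟨_, hx⟩, hxA⟩)
            · exact ⟨heE, heA⟩
            · exact ⟨hx, hxA⟩
        have hr : M₂.rank (insert e (E' \ A)) ≤ M₂.rank (E' \ A) + M₂.rank {e} :=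
          M₂.rank_insert_le e (E' \ A)
        rw [hEq] at h
        omega)
      exact ⟨J, hJE.trans hE'sub, h1, h2, h3⟩
    have he1 : 0 < M₁.rank {e} := Nat.pos_of_ne_zero hloop1
    have he2 : 0 < M₂.rank {e} := Nat.pos_of_ne_zero hloop2
    by_cases hdel : ∀ A ⊆ E', k ≤ M₁.rank A + M₂.rank (E' \ A)
    · obtain ⟨J, hJE, h1, h2, h3⟩ := ih E' hE'card M₁ M₂ k hdel
      exact ⟨J, hJE.trans hE'sub, h1, h2, h3⟩
    push_neg at hdel
    obtain ⟨A₁, hA₁, hA₁k⟩ := hdel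
    have heA₁ : e ∉ A₁ := fun hmem => (Finset.mem_erase.mp (hA₁ hmem)).1 rfl
    -- contraction hypothesis
    have hcon : ∀ A ⊆ E', k - 1 ≤ (M₁.contract e he1).rank A + (M₂.contract e he2).rank (E' \ A) := by
      intro A₂ hA₂
      by_contra hc
      push_neg at hc
      have heA₂ : e ∉ A₂ := fun hmem => (Finset.mem_erase.mp (hA₂ hmem)).1 rfl
      rw [contract_rank, contract_rank] at hc
      -- submodularity for M₁
      have s1 : A₁ ∪ insert e A₂ = insert e (A₁ ∪ A₂) := by
        ext x; simp only [Finset.mem_insert, Finset.mem_union]; tauto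
      have s2 : A₁ ∩ insert e A₂ = A₁ ∩ A₂ := by
        ext x
        simp only [Finset.mem_inter, Finset.mem_insert]
        constructor
        · rintro ⟨hx1, rfl | hx2⟩
          · exact absurd hx1 heA₁
          · exact ⟨hx1, hx2⟩
        · rintro ⟨hx1, hx2⟩
          exact ⟨hx1, Or.inr hx2⟩
      have sub1 := M₁.rank_submod A₁ (insert e A₂)
      rw [s1, s2] at sub1
      -- submodularity for M₂
      have t1 : (E' \ A₁) ∪ insert e (E' \ A₂) = E \ (A₁ ∩ A₂) := by
        ext x
        simp only [Finset.mem_union, Finset.mem_sdiff, Finset.mem_insert, Finset.mem_inter,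
          hE', Finset.mem_erase]
        by_cases hxe : x = e
        · subst hxe; tauto
        · tauto
      have t2 : (E' \ A₁) ∩ insert e (E' \ A₂) = E \ insert e (A₁ ∪ A₂) := by
        ext x
        simp only [Finset.mem_inter, Finset.mem_sdiff, Finset.mem_insert, Finset.mem_union,
          hE', Finset.mem_erase]
        by_cases hxe : x = e
        · subst hxe; tauto
        · tauto
      have sub2 := M₂.rank_submod (E' \ A₁) (insert e (E' \ A₂))
      rw [t1, t2] at sub2
      have hk1 := hk (A₁ ∩ A₂) ((Finset.inter_subset_left).trans (hA₁.trans hE'sub))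
      have hk2 := hk (insert e (A₁ ∪ A₂))
        (Finset.insert_subset heE ((Finset.union_subset hA₁ hA₂).trans hE'sub))
      have hr1 : M₁.rank {e} ≤ M₁.rank (insert e A₂) := M₁.rank_mono (by simp)
      have hr2 : M₂.rank {e} ≤ M₂.rank (insert e (E' \ A₂)) := M₂.rank_mono (by simp)
      have hc1 := M₁.rank_le_card {e}
      have hc2 := M₂.rank_le_card {e}
      simp at hc1 hc2
      omega
    obtain ⟨J', hJ'E, h1, h2, h3⟩ := ih E' hE'card (M₁.contract e he1) (M₂.contract e he2) (k - 1) hcon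
    have heJ' : e ∉ J' := fun hmem => (Finset.mem_erase.mp (hJ'E hmem)).1 rfl
    refine ⟨insert e J', Finset.insert_subset heE (hJ'E.trans hE'sub),
      M₁.contract_indep h1 heJ', M₂.contract_indep h2 heJ', ?_⟩
    rw [Finset.card_insert_of_notMem heJ']
    omega

/-- Matroid union / partition theorem for a set `X`. -/
theorem exists_partition (M₁ M₂ : FinMatroid n) (X : Finset (Fin n))
    (hX : ∀ S ⊆ X, S.card ≤ M₁.rank S + M₂.rank S) :
    ∃ I₁ I₂ : Finset (Fin n), M₁.Indep I₁ ∧ M₂.Indep I₂ ∧ Disjoint I₁ I₂ ∧ I₁ ∪ I₂ = X := by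
  have hr2X := M₂.rank_le_card X
  obtain ⟨J, hJX, h1, h2, h3⟩ := exists_common_indep X.card X le_rfl
    (M₁.restrict X) (M₂.dualIn X) (X.card - M₂.rank X) (by
      intro A hA
      show _ ≤ M₁.rank (A ∩ X) + ((X \ A ∩ X).card + M₂.rank (X \ (X \ A)) - M₂.rank X)
      have e1 : A ∩ X = A := Finset.inter_eq_left.mpr hA
      have e2 : X \ (X \ A) = A := by ext x; simp; intro h; exact hA h
      have e3 : (X \ A) ∩ X = X \ A := Finset.inter_eq_left.mpr Finset.sdiff_subset
      rw [e1, e2, e3]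
      have e4 : (X \ A).card = X.card - A.card := Finset.card_sdiff_of_subset hA
      have hcard : A.card ≤ X.card := Finset.card_le_card hA
      have hAX := hX A hA
      have hex := M₂.dual_exact X (X \ A)
      rw [e2, e3] at hex
      omega)
  -- unpack
  have hI1 : M₁.Indep J := by
    have : M₁.rank (J ∩ X) = J.card := h1
    rwa [Finset.inter_eq_left.mpr hJX] at this
  have hdual : (J ∩ X).card + M₂.rank (X \ J) - M₂.rank X = J.card := h2
  rw [Finset.inter_eq_left.mpr hJX] at hdual
  have hex := M₂.dual_exact X J
  rw [Finset.inter_eq_left.mpr hJX] at hex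
  have hr : M₂.rank (X \ J) = M₂.rank X := by
    have := M₂.rank_mono (Finset.sdiff_subset (s := X) (t := J))
    omega
  have hcardJ : J.card ≤ X.card := Finset.card_le_card hJX
  have hI2 : M₂.Indep (X \ J) := by
    have hc : (X \ J).card = X.card - J.card := Finset.card_sdiff_of_subset hJX
    have := M₂.rank_le_card (X \ J)
    unfold Indep
    omega
  exact ⟨J, X \ J, hI1, hI2, Finset.disjoint_sdiff,
    Finset.union_sdiff_of_subset hJX⟩

end FinMatroid

namespace FinMatroid

variable {n : ℕ}

lemma disj_union_val {s t : Finset (Fin n)} (h : Disjoint s t) :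
    s.val + t.val = (s ∪ t).val := by
  rw [← Finset.disjUnion_eq_union s t h]; rfl

lemma validFamily_empty (S : Finset (Fin n)) : ValidFamily S ∅ := ⟨by simp, by simp⟩

lemma famValue_empty (M₁ M₂ : FinMatroid n) (S : Finset (Fin n)) :
    famValue M₁ M₂ S ∅ = S.card := by
  simp [famValue]

lemma rankD_le (M₁ M₂ : FinMatroid n) {S : Finset (Fin n)} {𝒯 : Finset (Finset (Fin n))}
    (h : ValidFamily S 𝒯) : rankD M₁ M₂ S ≤ famValue M₁ M₂ S 𝒯 :=
  Nat.sInf_le ⟨𝒯, h, rfl⟩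

/-- The key consequence of `IndepD`: nonempty subsets satisfy the strict rank bound. -/
lemma key_ineq {M₁ M₂ : FinMatroid n} {I : Finset (Fin n)} (hI : IndepD M₁ M₂ I)
    {S : Finset (Fin n)} (hS : S ⊆ I) (hne : S.Nonempty) :
    S.card + 1 ≤ M₁.rank S + M₂.rank S := by
  have hvf : ValidFamily I {S} := by
    constructor
    · intro T hT
      rw [Finset.mem_singleton] at hT
      subst hT
      exact ⟨hS, hne⟩
    · intro T hT T' hT' hne'
      rw [Finset.mem_singleton] at hT hT'
      subst hT; subst hT'
      exact absurd rfl hne'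
  have h := rankD_le M₁ M₂ hvf
  rw [hI] at h
  have hfv : famValue M₁ M₂ I {S} =
      (M₁.rank S + M₂.rank S - 1) + (I \ S).card := by
    simp [famValue]
  have hcs : (I \ S).card = I.card - S.card := Finset.card_sdiff_of_subset hS
  have hle : S.card ≤ I.card := Finset.card_le_card hS
  have hpos : 0 < S.card := Finset.card_pos.mpr hne
  rw [hfv, hcs] at h
  omega

/-- Forward direction: independence in the Dilworth truncation yields decompositions. -/
lemma forward_dir {M₁ M₂ : FinMatroid n} (h : NoCommonLoops M₁ M₂) {I : Finset (Fin n)}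
    (hI : IndepD M₁ M₂ I) (j : Fin n) :
    ∃ I₁ I₂ : Finset (Fin n),
      M₁.Indep I₁ ∧ M₂.Indep I₂ ∧ I₁.val + I₂.val = j ::ₘ I.val := by
  by_cases hj : j ∈ I
  · -- j ∈ I : contract j in both matroids and partition I.erase j
    have hjr : 2 ≤ M₁.rank {j} + M₂.rank {j} := by
      have := key_ineq hI (Finset.singleton_subset_iff.mpr hj) ⟨j, Finset.mem_singleton_self j⟩
      simpa using this
    have hc1 := M₁.rank_le_card {j}
    have hc2 := M₂.rank_le_card {j}
    simp only [Finset.card_singleton] at hc1 hc2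
    have hj1 : 0 < M₁.rank {j} := by omega
    have hj2 : 0 < M₂.rank {j} := by omega
    obtain ⟨I₁', I₂', h1, h2, hdisj, hun⟩ :=
      exists_partition (M₁.contract j hj1) (M₂.contract j hj2) (I.erase j) (by
        intro S hS
        have hjS : j ∉ S := fun hmem => (Finset.mem_erase.mp (hS hmem)).1 rfl
        have hsub : insert j S ⊆ I :=
          Finset.insert_subset hj (hS.trans (Finset.erase_subset j I))
        have hkey := key_ineq hI hsub ⟨j, Finset.mem_insert_self j S⟩
        rw [Finset.card_insert_of_notMem hjS] at hkey
        have hr1 : M₁.rank {j} ≤ M₁.rank (insert j S) := M₁.rank_mono (by simp)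
        have hr2 : M₂.rank {j} ≤ M₂.rank (insert j S) := M₂.rank_mono (by simp)
        show S.card ≤ (M₁.rank (insert j S) - 1) + (M₂.rank (insert j S) - 1)
        omega)
    have hs1 : I₁' ⊆ I.erase j := hun ▸ Finset.subset_union_left
    have hs2 : I₂' ⊆ I.erase j := hun ▸ Finset.subset_union_right
    have hj1' : j ∉ I₁' := fun hmem => (Finset.mem_erase.mp (hs1 hmem)).1 rfl
    have hj2' : j ∉ I₂' := fun hmem => (Finset.mem_erase.mp (hs2 hmem)).1 rfl
    refine ⟨insert j I₁', insert j I₂',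
      M₁.contract_indep h1 hj1', M₂.contract_indep h2 hj2', ?_⟩
    rw [Finset.insert_val_of_notMem hj1', Finset.insert_val_of_notMem hj2']
    have hIval : I.val = j ::ₘ (I.erase j).val := by
      rw [Finset.erase_val]
      exact (Multiset.cons_erase (Finset.mem_val.mpr hj)).symm
    have hsum : I₁'.val + I₂'.val = (I.erase j).val := by
      rw [disj_union_val hdisj, hun]
    rw [hIval, ← hsum]
    rw [Multiset.cons_add, add_comm I₁'.val, Multiset.cons_add, add_comm]
  · -- j ∉ I : partition insert j I
    obtain ⟨I₁, I₂, h1, h2, hdisj, hun⟩ :=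
      exists_partition M₁ M₂ (insert j I) (by
        intro S hS
        rcases S.eq_empty_or_nonempty with rfl | hne
        · simp
        by_cases hjS : j ∈ S
        · rcases (S.erase j).eq_empty_or_nonempty with hS' | hne'
          · have hSj : S = {j} := by
              apply Finset.eq_singleton_iff_unique_mem.mpr
              refine ⟨hjS, fun x hx => ?_⟩
              by_contra hxj
              exact absurd (Finset.mem_erase.mpr ⟨hxj, hx⟩) (by simp [hS'])
            subst hSj
            have := h j
            simp only [Finset.card_singleton]
            omega
          · have hsub : S.erase j ⊆ I := by
              intro x hx
              have hx' := Finset.mem_erase.mp hx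
              have := hS hx'.2
              rcases Finset.mem_insert.mp this with rfl | hmem
              · exact absurd rfl hx'.1
              · exact hmem
            have hkey := key_ineq hI hsub hne'
            have hcard : (S.erase j).card = S.card - 1 := Finset.card_erase_of_mem hjS
            have hpos : 0 < S.card := Finset.card_pos.mpr hne
            have hr1 : M₁.rank (S.erase j) ≤ M₁.rank S := M₁.rank_mono (Finset.erase_subset j S)
            have hr2 : M₂.rank (S.erase j) ≤ M₂.rank S := M₂.rank_mono (Finset.erase_subset j S)
            omega
        · have hsub : S ⊆ I := by
            intro x hx
            rcases Finset.mem_insert.mp (hS hx) with rfl | hmem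
            · exact absurd hx hjS
            · exact hmem
          have := key_ineq hI hsub hne
          omega)
    refine ⟨I₁, I₂, h1, h2, ?_⟩
    rw [disj_union_val hdisj, hun]
    exact Finset.insert_val_of_notMem hj

/-- Reverse direction. -/
lemma reverse_dir {M₁ M₂ : FinMatroid n} {I : Finset (Fin n)}
    (hdec : ∀ j : Fin n, ∃ I₁ I₂ : Finset (Fin n),
      M₁.Indep I₁ ∧ M₂.Indep I₂ ∧ I₁.val + I₂.val = j ::ₘ I.val) :
    IndepD M₁ M₂ I := by
  unfold IndepD
  apply le_antisymm
  · calc rankD M₁ M₂ I ≤ famValue M₁ M₂ I ∅ := rankD_le M₁ M₂ (validFamily_empty I)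
      _ = I.card := famValue_empty M₁ M₂ I
  · show I.card ≤ rankD M₁ M₂ I
    unfold rankD
    apply le_csInf
    · exact ⟨_, ∅, validFamily_empty I, rfl⟩
    rintro v ⟨𝒯, hval, rfl⟩
    -- each member of the family satisfies the strict inequality
    have hterm : ∀ T ∈ 𝒯, T.card + 1 ≤ M₁.rank T + M₂.rank T := by
      intro T hT
      obtain ⟨hTI, hTne⟩ := hval.1 T hT
      obtain ⟨j, hjT⟩ := hTne
      obtain ⟨I₁, I₂, h1, h2, hsum⟩ := hdec j
      have c1 : (I₁ ∩ T).card ≤ M₁.rank T :=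
        indep_card_le_rank M₁ (M₁.indep_subset h1 Finset.inter_subset_left)
          Finset.inter_subset_right
      have c2 : (I₂ ∩ T).card ≤ M₂.rank T :=
        indep_card_le_rank M₂ (M₂.indep_subset h2 Finset.inter_subset_left)
          Finset.inter_subset_right
      have ecount : ∀ (J : Finset (Fin n)), (J ∩ T).card = ∑ t ∈ T, Multiset.count t J.val := by
        intro J
        have e1 : J ∩ T = T.filter (· ∈ J) := by
          ext x; simp [Finset.mem_filter]; tauto
        rw [e1, Finset.card_filter]
        apply Finset.sum_congr rfl
        intro t _
        by_cases htJ : t ∈ J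
        · rw [if_pos htJ, Multiset.count_eq_one_of_mem J.nodup htJ]
        · rw [if_neg htJ, Multiset.count_eq_zero_of_notMem (by simpa using htJ)]
      have ekey : (I₁ ∩ T).card + (I₂ ∩ T).card = T.card + 1 := by
        rw [ecount I₁, ecount I₂, ← Finset.sum_add_distrib]
        have e2 : ∀ t ∈ T, Multiset.count t I₁.val + Multiset.count t I₂.val =
            1 + (if t = j then 1 else 0) := by
          intro t ht
          rw [← Multiset.count_add, hsum, Multiset.count_cons]
          rw [Multiset.count_eq_one_of_mem I.nodup (hTI ht)]
        rw [Finset.sum_congr rfl e2, Finset.sum_add_distrib]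
        simp [Finset.sum_ite_eq' T j (fun _ => 1), hjT]
      omega
    -- sum the inequalities
    have hsumle : (𝒯.sup id).card ≤ ∑ T ∈ 𝒯, (M₁.rank T + M₂.rank T - 1) := by
      have hcardsup : (𝒯.sup id).card = ∑ T ∈ 𝒯, T.card := by
        rw [Finset.sup_eq_biUnion]
        exact Finset.card_biUnion hval.2
      rw [hcardsup]
      apply Finset.sum_le_sum
      intro T hT
      have := hterm T hT
      omega
    have hsupsub : 𝒯.sup id ⊆ I := Finset.sup_le fun T hT => (hval.1 T hT).1
    have hcs : (I \ 𝒯.sup id).card = I.card - (𝒯.sup id).card := Finset.card_sdiff_of_subset hsupsub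
    have hle : (𝒯.sup id).card ≤ I.card := Finset.card_le_card hsupsub
    unfold famValue
    omega

end FinMatroid

open FinMatroid in
/-- `I` is independent in `D(M₁,M₂)` iff for every `j ∈ [n]` there are
independent sets `I₁` of `M₁` and `I₂` of `M₂` whose multiset sum is
`I + {j}`. -/
theorem indepD_iff_multiset_sum (n : ℕ) (M₁ M₂ : FinMatroid n)
    (h : NoCommonLoops M₁ M₂) (I : Finset (Fin n)) :
    IndepD M₁ M₂ I ↔
      ∀ j : Fin n, ∃ I₁ I₂ : Finset (Fin n),
        M₁.Indep I₁ ∧ M₂.Indep I₂ ∧ I₁.val + I₂.val = j ::ₘ I.val := by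
  constructor
  · intro hI j
    exact forward_dir h hI j
  · exact reverse_dir
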